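/- Let p > 0. For 1 ≤ i ≤ 111 set c_i = i + 9 (so the class sizes are 10, 11, …, 120 and the total enrollment is c₁ + ⋯ + c₁₁₁ = 7215), and let M be the 111×111 real matrix with M_{ii} = (c_i−1)p and M_{ij} = (2c_j/(7215−c_i))·(c_j−1)·p for i ≠ j. Then the spectral radius ρ of M satisfies 251·p ≤ ρ ≤ 252·p. -/

import Mathlib

open Matrix

attribute [local instance] Matrix.linftyOpNormedRing Matrix.linftyOpNormedAlgebra

open scoped ENNReal NNReal

namespace OnlineCutoffAux

/-- The numeric sum bound. -/
lemma sumS :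
    999/1000 ≤ ∑ k ∈ Finset.range 111,
      (fun x : ℝ => x*(x-1)*(4/((7215-x)*(505-2*x)+4*x*(x-1)))) ((k:ℝ)+10) ∧
    ∑ k ∈ Finset.range 111,
      (fun x : ℝ => x*(x-1)*(4/((7215-x)*(505-2*x)+4*x*(x-1)))) ((k:ℝ)+10) ≤ 1001/1000 := by
  norm_num [Finset.sum_range_succ]

lemma Epos {x : ℝ} (h1 : 10 ≤ x) (h2 : x ≤ 120) :
    0 < (7215-x)*(505-2*x)+4*x*(x-1) := by nlinarith

/-- The per-row inequality, lower part. -/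
lemma row_low {x S : ℝ} (h1 : 10 ≤ x) (h2 : x ≤ 120) (hS : 999/1000 ≤ S) :
    251 * (4/((7215-x)*(505-2*x)+4*x*(x-1))) ≤
      (2/(7215-x)) * S + ((x - 1)*(4/((7215-x)*(505-2*x)+4*x*(x-1)))
        - (2*x/(7215-x))*(x - 1)*(4/((7215-x)*(505-2*x)+4*x*(x-1)))) := by
  have hE := Epos h1 h2
  have h7 : (0:ℝ) < 7215 - x := by linarith
  rw [← sub_nonneg]
  have key : (2/(7215-x)) * S + ((x - 1)*(4/((7215-x)*(505-2*x)+4*x*(x-1)))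
        - (2*x/(7215-x))*(x - 1)*(4/((7215-x)*(505-2*x)+4*x*(x-1))))
        - 251 * (4/((7215-x)*(505-2*x)+4*x*(x-1)))
      = (2*S*((7215-x)*(505-2*x)+4*x*(x-1)) + 4*(x-1)*(7215-x) - 8*x*(x-1)
          - 1004*(7215-x)) / ((7215-x)*((7215-x)*(505-2*x)+4*x*(x-1))) := by
    have := h7.ne'
    generalize (7215-x)*(505-2*x)+4*x*(x-1) = E at *
    have := hE.ne'
    field_simp
    ring
  rw [key]
  apply div_nonneg _ (by positivity)
  nlinarith [mul_le_mul_of_nonneg_right hS hE.le,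
    mul_nonneg (sub_nonneg.2 h1) (sub_nonneg.2 h2)]

/-- The per-row inequality, upper part. -/
lemma row_high {x S : ℝ} (h1 : 10 ≤ x) (h2 : x ≤ 120) (hS : S ≤ 1001/1000) :
    (2/(7215-x)) * S + ((x - 1)*(4/((7215-x)*(505-2*x)+4*x*(x-1)))
        - (2*x/(7215-x))*(x - 1)*(4/((7215-x)*(505-2*x)+4*x*(x-1)))) ≤
      252 * (4/((7215-x)*(505-2*x)+4*x*(x-1))) := by
  have hE := Epos h1 h2
  have h7 : (0:ℝ) < 7215 - x := by linarith
  rw [← sub_nonneg]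
  have key : 252 * (4/((7215-x)*(505-2*x)+4*x*(x-1)))
        - ((2/(7215-x)) * S + ((x - 1)*(4/((7215-x)*(505-2*x)+4*x*(x-1)))
          - (2*x/(7215-x))*(x - 1)*(4/((7215-x)*(505-2*x)+4*x*(x-1)))))
      = (1008*(7215-x) - (2*S*((7215-x)*(505-2*x)+4*x*(x-1)) + 4*(x-1)*(7215-x)
          - 8*x*(x-1))) / ((7215-x)*((7215-x)*(505-2*x)+4*x*(x-1))) := by
    have := h7.ne'
    generalize (7215-x)*(505-2*x)+4*x*(x-1) = E at *
    have := hE.ne'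
    field_simp
    ring
  rw [key]
  apply div_nonneg _ (by positivity)
  nlinarith [mul_le_mul_of_nonneg_right hS hE.le,
    mul_nonneg (sub_nonneg.2 h1) (sub_nonneg.2 h2)]

/-- Collatz–Wielandt style bounds on the spectral radius of a nonnegative matrix via
row sums, proved using Gelfand's formula and the `L∞`-operator norm. -/
lemma spectral_bounds {n : Type*} [Fintype n] [DecidableEq n] [Nonempty n]
    (B : Matrix n n ℝ) (hB : ∀ i j, 0 ≤ B i j) {r R : ℝ} (hr : 0 ≤ r)
    (hlow : ∀ i, r ≤ ∑ j, B i j) (hhigh : ∀ i, ∑ j, B i j ≤ R) :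
    ENNReal.ofReal r ≤ spectralRadius ℂ (B.map (fun x : ℝ => (x : ℂ))) ∧
      spectralRadius ℂ (B.map (fun x : ℝ => (x : ℂ))) ≤ ENNReal.ofReal R := by
  haveI : CompleteSpace (Matrix n n ℂ) := FiniteDimensional.complete ℂ _
  obtain ⟨i₀⟩ := ‹Nonempty n›
  have hR : 0 ≤ R := hr.trans ((hlow i₀).trans (hhigh i₀))
  set a : Matrix n n ℂ := Complex.ofRealHom.mapMatrix B with ha
  have haB : B.map (fun x : ℝ => (x : ℂ)) = a := rfl
  rw [haB]
  have hrowsum : ∀ (X : Matrix n n ℝ), (∀ i j, 0 ≤ X i j) → ∀ i,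
      ((∑ j, X i j).toNNReal : ℝ≥0) = ∑ j, ‖(Complex.ofRealHom.mapMatrix X) i j‖₊ := by
    intro X hX i
    rw [← NNReal.coe_inj, Real.coe_toNNReal _ (Finset.sum_nonneg fun j _ => hX i j),
      NNReal.coe_sum]
    refine Finset.sum_congr rfl fun j _ => ?_
    rw [coe_nnnorm, show (Complex.ofRealHom.mapMatrix X) i j = ((X i j : ℝ) : ℂ) from rfl,
      Complex.norm_real, Real.norm_eq_abs, abs_of_nonneg (hX i j)]
  constructor
  · -- lower bound via Gelfand's formula
    have hpow : ∀ k : ℕ, (∀ i j, 0 ≤ (B ^ k) i j) ∧ ∀ i, r ^ k ≤ ∑ j, (B ^ k) i j := by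
      intro k
      induction k with
      | zero =>
        constructor
        · intro i j
          simp only [pow_zero, Matrix.one_apply]
          positivity
        · intro i
          simp [Matrix.one_apply]
      | succ k ih =>
        constructor
        · intro i j
          rw [pow_succ, Matrix.mul_apply]
          exact Finset.sum_nonneg fun l _ => mul_nonneg (ih.1 i l) (hB l j)
        · intro i
          have hexp : ∑ j, (B ^ (k+1)) i j = ∑ l, (B ^ k) i l * ∑ j, B l j := by
            rw [pow_succ]
            calc ∑ j, (B ^ k * B) i j = ∑ j, ∑ l, (B ^ k) i l * B l j :=
                Finset.sum_congr rfl fun j _ => Matrix.mul_apply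
            _ = ∑ l, ∑ j, (B ^ k) i l * B l j := Finset.sum_comm
            _ = ∑ l, (B ^ k) i l * ∑ j, B l j :=
                Finset.sum_congr rfl fun l _ => (Finset.mul_sum _ _ _).symm
          rw [hexp]
          calc r ^ (k+1) = r ^ k * r := by ring
          _ ≤ (∑ l, (B ^ k) i l) * r := mul_le_mul_of_nonneg_right (ih.2 i) hr
          _ = ∑ l, (B ^ k) i l * r := by rw [Finset.sum_mul]
          _ ≤ ∑ l, (B ^ k) i l * (∑ j, B l j) := by
              refine Finset.sum_le_sum fun l _ => ?_
              exact mul_le_mul_of_nonneg_left (hlow l) (ih.1 i l)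
    have hnorm : ∀ k : ℕ, (r ^ k).toNNReal ≤ ‖a ^ k‖₊ := by
      intro k
      rw [ha, ← map_pow, Matrix.linfty_opNNNorm_def]
      refine le_trans ?_ (Finset.le_sup (Finset.mem_univ i₀))
      rw [← hrowsum (B ^ k) (hpow k).1 i₀]
      exact Real.toNNReal_le_toNNReal ((hpow k).2 i₀)
    refine ge_of_tendsto (spectrum.pow_nnnorm_pow_one_div_tendsto_nhds_spectralRadius a)
      (Filter.eventually_atTop.mpr ⟨1, fun k hk => ?_⟩)
    have hk0 : ((k:ℝ)) ≠ 0 := by positivity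
    have hkey : ENNReal.ofReal r = (((r.toNNReal : ℝ≥0∞)) ^ (k : ℕ)) ^ (1 / (k:ℝ)) := by
      rw [← ENNReal.rpow_natCast, ← ENNReal.rpow_mul, mul_one_div, div_self hk0,
        ENNReal.rpow_one]
      rfl
    rw [hkey]
    refine ENNReal.rpow_le_rpow ?_ (by positivity)
    rw [← ENNReal.coe_pow, ENNReal.coe_le_coe, ← Real.toNNReal_pow hr]
    exact hnorm k
  · -- upper bound via the norm
    refine (spectrum.spectralRadius_le_nnnorm (𝕜 := ℂ) a).trans ?_
    rw [← enorm_eq_nnnorm, ← ofReal_norm]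
    refine ENNReal.ofReal_le_ofReal ?_
    rw [Matrix.linfty_opNorm_def, ← Real.coe_toNNReal R hR, NNReal.coe_le_coe]
    refine Finset.sup_le fun i _ => ?_
    rw [← hrowsum B hB i]
    exact Real.toNNReal_le_toNNReal (hhigh i)

end OnlineCutoffAux

/-- For the `111×111` next-generation matrix of a university with one class of each size
`10, 11, …, 120` (total enrollment 7215), the spectral radius `ρ` satisfies
`251·p ≤ ρ ≤ 252·p`. -/
theorem online_cutoff_spectral_radius (p : ℝ) (hp : 0 < p)
    (c : Fin 111 → ℝ) (hc : ∀ i, c i = (i : ℕ) + 10)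
    (M : Matrix (Fin 111) (Fin 111) ℝ)
    (hM : ∀ i j, M i j =
      if i = j then (c i - 1) * p else (2 * c j / (7215 - c i)) * (c j - 1) * p) :
    ENNReal.ofReal (251 * p) ≤ spectralRadius ℂ (M.map (fun x : ℝ => (x : ℂ))) ∧
    spectralRadius ℂ (M.map (fun x : ℝ => (x : ℂ))) ≤ ENNReal.ofReal (252 * p) := by
  classical
  have hcb : ∀ i : Fin 111, 10 ≤ c i ∧ c i ≤ 120 := by
    intro i
    rw [hc i]
    have h1 : (0:ℝ) ≤ (i : ℕ) := Nat.cast_nonneg _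
    have h2 : ((i : ℕ) : ℝ) ≤ 110 := by
      have := Nat.lt_succ_iff.mp i.isLt
      exact_mod_cast this
    constructor <;> linarith
  -- the weight vector
  set v : Fin 111 → ℝ := fun i =>
    4 / ((7215 - c i)*(505 - 2*c i) + 4*(c i)*(c i - 1)) with hv
  have hvpos : ∀ i, 0 < v i := by
    intro i
    have := OnlineCutoffAux.Epos (hcb i).1 (hcb i).2
    simp only [hv]
    positivity
  -- the sum S
  set S : ℝ := ∑ j, c j * (c j - 1) * v j with hS
  have hSbounds : 999/1000 ≤ S ∧ S ≤ 1001/1000 := by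
    have heq : S = ∑ k ∈ Finset.range 111,
        (fun x : ℝ => x*(x-1)*(4/((7215-x)*(505-2*x)+4*x*(x-1)))) ((k:ℝ)+10) := by
      rw [hS, ← Fin.sum_univ_eq_sum_range]
      refine Finset.sum_congr rfl fun j _ => ?_
      simp only [hv]
      rw [hc j]
    rw [heq]
    exact OnlineCutoffAux.sumS
  have hvlow : ∀ i, 251 * v i ≤
      (2/(7215 - c i)) * S + ((c i - 1)*v i - (2*(c i)/(7215 - c i))*(c i - 1)*v i) := by
    intro i
    have := OnlineCutoffAux.row_low (hcb i).1 (hcb i).2 hSbounds.1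
    simpa only [hv] using this
  have hvhigh : ∀ i,
      (2/(7215 - c i)) * S + ((c i - 1)*v i - (2*(c i)/(7215 - c i))*(c i - 1)*v i)
        ≤ 252 * v i := by
    intro i
    have := OnlineCutoffAux.row_high (hcb i).1 (hcb i).2 hSbounds.2
    simpa only [hv] using this
  clear_value S
  clear_value v
  clear hv hSbounds
  -- row sums of M weighted by v
  have hrow : ∀ i, ∑ j, M i j * v j
      = p * ((2/(7215 - c i)) * S + ((c i - 1)*v i - (2*(c i)/(7215 - c i))*(c i - 1)*v i)) := by
    intro i
    have hterm : ∀ j, M i j * v j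
        = (2 * p/(7215 - c i)) * (c j * (c j - 1) * v j)
          + (if i = j then ((c i - 1)*p*v i - (2*(c i)/(7215 - c i))*(c i - 1)*p*v i) else 0) := by
      intro j
      rw [hM i j]
      split_ifs with h
      · subst h; ring
      · ring
    rw [Finset.sum_congr rfl fun j _ => hterm j, Finset.sum_add_distrib,
      Finset.sum_ite_eq Finset.univ i
        (fun _ => ((c i - 1)*p*v i - (2*(c i)/(7215 - c i))*(c i - 1)*p*v i)),
      if_pos (Finset.mem_univ i), ← Finset.mul_sum, ← hS]
    ring
  -- the conjugated matrix
  set B : Matrix (Fin 111) (Fin 111) ℝ :=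
    Matrix.of fun i j => (v i)⁻¹ * M i j * v j with hB
  have hBapp : ∀ i j, B i j = (v i)⁻¹ * M i j * v j := fun i j => rfl
  have hBnn : ∀ i j, 0 ≤ B i j := by
    intro i j
    have hM0 : 0 ≤ M i j := by
      rw [hM i j]
      have h1 := (hcb i).1; have h2 := (hcb i).2
      have h3 := (hcb j).1; have h4 := (hcb j).2
      have h5 : (0:ℝ) < 7215 - c i := by linarith
      split_ifs with h
      · nlinarith
      · have h6 : (0:ℝ) ≤ 2 * c j / (7215 - c i) := by positivity
        have h7 : (0:ℝ) ≤ c j - 1 := by linarith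
        positivity
    rw [hBapp]
    exact mul_nonneg (mul_nonneg (inv_nonneg.2 (hvpos i).le) hM0) (hvpos j).le
  have hBrow : ∀ i, ∑ j, B i j = (v i)⁻¹ * ∑ j, M i j * v j := by
    intro i
    rw [Finset.mul_sum]
    exact Finset.sum_congr rfl fun j _ => by rw [hBapp]; ring
  have hBlow : ∀ i, 251 * p ≤ ∑ j, B i j := by
    intro i
    rw [hBrow i, hrow i]
    have h := hvlow i
    have hvi := hvpos i
    calc 251 * p = (v i)⁻¹ * (p * (251 * v i)) := by
          rw [show (v i)⁻¹ * (p * (251 * v i)) = 251 * p * ((v i)⁻¹ * v i) from by ring,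
            inv_mul_cancel₀ hvi.ne', mul_one]
    _ ≤ _ := mul_le_mul_of_nonneg_left (mul_le_mul_of_nonneg_left h hp.le)
          (inv_nonneg.2 hvi.le)
  have hBhigh : ∀ i, ∑ j, B i j ≤ 252 * p := by
    intro i
    rw [hBrow i, hrow i]
    have h := hvhigh i
    have hvi := hvpos i
    calc (v i)⁻¹ * (p * ((2/(7215 - c i)) * S
          + ((c i - 1)*v i - (2*(c i)/(7215 - c i))*(c i - 1)*v i)))
        ≤ (v i)⁻¹ * (p * (252 * v i)) :=
          mul_le_mul_of_nonneg_left (mul_le_mul_of_nonneg_left h hp.le)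
            (inv_nonneg.2 hvi.le)
    _ = 252 * p := by
          rw [show (v i)⁻¹ * (p * (252 * v i)) = 252 * p * ((v i)⁻¹ * v i) from by ring,
            inv_mul_cancel₀ hvi.ne', mul_one]
  -- conjugation: spectrum of M equals spectrum of B
  have hvne : ∀ i, ((v i : ℝ) : ℂ) ≠ 0 := fun i => Complex.ofReal_ne_zero.mpr (hvpos i).ne'
  let d : Fin 111 → ℂ := fun i => ((v i : ℝ) : ℂ)
  let dinv : Fin 111 → ℂ := fun i => (((v i : ℝ) : ℂ))⁻¹
  let u : (Matrix (Fin 111) (Fin 111) ℂ)ˣ :=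
    { val := Matrix.diagonal d
      inv := Matrix.diagonal dinv
      val_inv := by
        rw [Matrix.diagonal_mul_diagonal]
        convert Matrix.diagonal_one using 2
        exact funext fun i => mul_inv_cancel₀ (hvne i)
      inv_val := by
        rw [Matrix.diagonal_mul_diagonal]
        convert Matrix.diagonal_one using 2
        exact funext fun i => inv_mul_cancel₀ (hvne i) }
  have hcu : (u : Matrix (Fin 111) (Fin 111) ℂ) = Matrix.diagonal d := rfl
  have hcu' : ((u⁻¹ : _ˣ) : Matrix (Fin 111) (Fin 111) ℂ) = Matrix.diagonal dinv := rfl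
  have hconj : M.map (fun x : ℝ => (x : ℂ))
      = (u : Matrix (Fin 111) (Fin 111) ℂ) * (B.map (fun x : ℝ => (x : ℂ)))
          * ((u⁻¹ : _ˣ) : Matrix (Fin 111) (Fin 111) ℂ) := by
    ext i j
    rw [hcu, hcu', Matrix.mul_diagonal, Matrix.diagonal_mul, Matrix.map_apply,
      Matrix.map_apply, hBapp]
    show (M i j : ℂ) = (v i : ℂ) * (((v i)⁻¹ * M i j * v j : ℝ) : ℂ) * ((v j : ℂ))⁻¹
    have hi := hvne i
    have hj := hvne j
    push_cast
    field_simp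
  have hspec : spectrum ℂ (M.map (fun x : ℝ => (x : ℂ)))
      = spectrum ℂ (B.map (fun x : ℝ => (x : ℂ))) := by
    rw [hconj, spectrum.units_conjugate]
  have hrad : spectralRadius ℂ (M.map (fun x : ℝ => (x : ℂ)))
      = spectralRadius ℂ (B.map (fun x : ℝ => (x : ℂ))) := by
    unfold spectralRadius
    rw [hspec]
  rw [hrad]
  exact OnlineCutoffAux.spectral_bounds B hBnn (by positivity) hBlow hBhigh
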